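/- Let X be an arbitrary variety of dimension d, B an effective ℝ-Cartier divisor on X, and x a closed point at which X is singular. If m̂ld(x; X, 𝒥_X·B) ≥ d − 1, then B = 0 near x and m̂ld(x; X, 𝒥_X) = d − 1 exactly. -/
import Mathlib


/-!
STATEMENT 19: Let `X` be an arbitrary variety of dimension `d`, `B` an effective ℝ-Cartier
divisor on `X`, and `x` a closed point at which `X` is singular.  If
`m̂ld(x; X, 𝒥_X·B) ≥ d − 1`, then `B = 0` near `x` and `m̂ld(x; X, 𝒥_X) = d − 1` exactly.

Here `m̂ld(x;X,𝒥_X·B) = inf {k̂_E − ord_E 𝒥_X − ord_E B + 1}` over divisorial valuations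
centered at `x` (indexed by `ι`, with Mather discrepancies `k̂_E ∈ ℤ`, `ord_E 𝒥_X ∈ ℤ`,
`ord_E B ≥ 0`).  The propositions `Smooth` (= `(X,x)` is smooth) and `Bzero` (= `B = 0`
near `x`) and the hypotheses record the facts cited in the context:
(1) `m̂ld(x;X,𝒥_X) ≤ d`, with equality iff `(X,x)` is smooth;
(2) `m̂ld(x;X,𝒥_X)` is an integer;
(3) if `B ≠ 0` near `x` then `m̂ld(x;X,𝒥_X·B) < m̂ld(x;X,𝒥_X)` (and equality if `B = 0`).
-/

theorem singular_high_mather_mld (d : ℕ)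
    (ι : Type*) [Nonempty ι]
    (khat : ι → ℤ) (jord : ι → ℤ) (bord : ι → ℝ) (hbord : ∀ E, 0 ≤ bord E)
    (Smooth Bzero : Prop)
    -- `m̂ld(x;X,𝒥_X)` and `m̂ld(x;X,𝒥_X·B)`:
    (mldJ mldJB : ℝ)
    (hmldJ : mldJ = sInf (Set.range fun E => (khat E : ℝ) - (jord E : ℝ) + 1))
    (hmldJB : mldJB = sInf (Set.range fun E => (khat E : ℝ) - (jord E : ℝ) - bord E + 1))
    -- fact (1): `m̂ld(x;X,𝒥_X) ≤ d`, equality iff smooth: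
    (hle : mldJ ≤ (d : ℝ)) (hsmooth_iff : mldJ = (d : ℝ) ↔ Smooth)
    -- fact (2): `m̂ld(x;X,𝒥_X)` is an integer:
    (hint : ∃ z : ℤ, mldJ = (z : ℝ))
    -- fact (3): `B ≠ 0` near `x` forces a strict drop, `B = 0` gives equality:
    (hBlt : ¬ Bzero → mldJB < mldJ) (hBeq : Bzero → mldJB = mldJ)
    -- `(X, x)` is singular:
    (hsing : ¬ Smooth)
    -- hypothesis: `m̂ld(x;X,𝒥_X·B) ≥ d − 1`:
    (hmain : (d : ℝ) - 1 ≤ mldJB) :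
    Bzero ∧ mldJ = (d : ℝ) - 1 ∧ mldJB = (d : ℝ) - 1 := by
  obtain ⟨z, hz⟩ := hint
  have hne : mldJ ≠ (d : ℝ) := fun h => hsing (hsmooth_iff.mp h)
  have hlt : mldJ < (d : ℝ) := lt_of_le_of_ne hle hne
  have hzd : (z : ℝ) < (d : ℤ) := by rw [← hz]; exact_mod_cast hlt
  have hzle : z ≤ (d : ℤ) - 1 := by
    have := Int.lt_iff_add_one_le.mp (by exact_mod_cast hzd)
    omega
  have hJle : mldJ ≤ (d : ℝ) - 1 := by
    rw [hz]
    have : ((z : ℝ)) ≤ ((d : ℤ) : ℝ) - 1 := by exact_mod_cast hzle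
    simpa using this
  by_cases hB : Bzero
  · have he := hBeq hB
    refine ⟨hB, ?_, ?_⟩ <;> linarith
  · exact absurd (hBlt hB) (not_lt.mpr (le_trans hJle hmain))
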